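/- For n ≥ 1, the joint generating function of spread and block over partitions of [n] avoiding the pattern 13/2 equals (q+t)^{n-1} t; consequently the generating function for the dimension index over this avoidance class equals 2^{n-1} q^n. -/

import Mathlib

open scoped Classical
noncomputable section

/-- A set partition of `[n]` is modeled as a setoid (equivalence relation) on `Fin n`. -/
abbrev SetPartition (n : ℕ) := Setoid (Fin n)

/-- Pattern containment for set partitions: `P` contains `Q` if there is a strictly
increasing map along which the block structure of `Q` is induced by that of `P`. -/
def SPContains {n k : ℕ} (P : SetPartition n) (Q : SetPartition k) : Prop :=
  ∃ f : Fin k → Fin n, StrictMono f ∧ ∀ a b : Fin k, Q.r a b ↔ P.r (f a) (f b)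

def SPAvoids {n k : ℕ} (P : SetPartition n) (Q : SetPartition k) : Prop :=
  ¬ SPContains P Q

noncomputable instance instFintypeSetoidFin (n : ℕ) : Fintype (SetPartition n) :=
  Fintype.ofInjective (fun P => P.r) fun P Q h => Setoid.ext fun a b => by simp only at h; rw [show P.r = Q.r from h]

/-- The (0-based) minimum of the block containing `i`. -/
def blockMin {n : ℕ} (P : SetPartition n) (i : Fin n) : ℕ :=
  sInf {j : ℕ | ∃ h : j < n, P.r ⟨j, h⟩ i}

/-- The (0-based) maximum of the block containing `i`. -/
def blockMax {n : ℕ} (P : SetPartition n) (i : Fin n) : ℕ :=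
  sSup {j : ℕ | ∃ h : j < n, P.r ⟨j, h⟩ i}

/-- The spread statistic: the sum over blocks of (max − min). -/
def spread {n : ℕ} (P : SetPartition n) : ℕ :=
  ∑ i ∈ Finset.univ.filter (fun i : Fin n => blockMin P i = (i : ℕ)),
    (blockMax P i - (i : ℕ))

/-- The number of blocks. -/
def blockNum {n : ℕ} (P : SetPartition n) : ℕ :=
  (Finset.univ.image (fun i : Fin n => Quotient.mk P i)).card

/-- The restricted growth function of a partition: `rgf P i` is the index (starting
from 1) of the block of `i` when the blocks are listed in order of their minima. -/
def rgf {n : ℕ} (P : SetPartition n) (i : Fin n) : ℕ :=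
  (Finset.univ.filter (fun j : Fin n => blockMin P j = (j : ℕ) ∧ (j : ℕ) ≤ blockMin P i)).card

/-- `w : Fin n → ℕ` is a restricted growth function. -/
def IsRGF {n : ℕ} (w : Fin n → ℕ) : Prop :=
  ∀ i : Fin n, 1 ≤ w i ∧ w i ≤ (Finset.univ.filter (fun j : Fin n => j < i)).sup w + 1

/-- patterns -/
def p123 : SetPartition 3 := Setoid.ker ![0, 0, 0]
def p1_2_3 : SetPartition 3 := Setoid.ker ![0, 1, 2]
def p13_2 : SetPartition 3 := Setoid.ker ![0, 1, 0]
def p12_3 : SetPartition 3 := Setoid.ker ![0, 0, 1]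
def p1_23 : SetPartition 3 := Setoid.ker ![0, 1, 1]
def p13_24 : SetPartition 4 := Setoid.ker ![0, 1, 0, 1]


/-- The joint generating function of spread and block over partitions of `[n]`
avoiding the pattern `Q`. -/
def SB {k : ℕ} (n : ℕ) (Q : SetPartition k) (q t : ℚ) : ℚ :=
  ∑ P ∈ Finset.univ.filter (fun P : SetPartition n => SPAvoids P Q),
    q ^ spread P * t ^ blockNum P

/-- The generating function of the dimension index over partitions of `[n]` avoiding `Q`. -/
def DimGF {k : ℕ} (n : ℕ) (Q : SetPartition k) (q : ℚ) : ℚ :=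
  ∑ P ∈ Finset.univ.filter (fun P : SetPartition n => SPAvoids P Q),
    q ^ (spread P + blockNum P)

section Aux

variable {m : ℕ}

/-- Convexity: blocks are intervals. -/
def Cx (P : SetPartition (m + 1)) : Prop :=
  ∀ i j k : Fin (m + 1), i ≤ j → j ≤ k → P.r i k → P.r i j

lemma avoids_iff (P : SetPartition (m + 1)) : SPAvoids P p13_2 ↔ Cx P := by
  constructor
  · intro hav i j k hij hjk hik
    by_contra hnij
    apply hav
    have hij' : i < j := lt_of_le_of_ne hij (by rintro rfl; exact hnij (P.refl i))
    have hjk' : j < k := lt_of_le_of_ne hjk (by rintro rfl; exact hnij hik)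
    refine ⟨![i, j, k], ?_, ?_⟩
    · intro a b hab
      fin_cases a <;> fin_cases b <;>
        simp_all [Matrix.cons_val_zero, Matrix.cons_val_one] <;>
        first
        | exact hij' | exact hjk' | exact lt_trans hij' hjk'
        | exact absurd hab (by decide)
    · intro a b
      have hnji : ¬ P.r j i := fun h => hnij (P.symm h)
      have hnjk : ¬ P.r j k := fun h => hnij (P.trans hik (P.symm h))
      have hnkj : ¬ P.r k j := fun h => hnij (P.trans hik h)
      fin_cases a <;> fin_cases b <;>
        simp_all [p13_2, Setoid.ker_def, Matrix.cons_val_zero, Matrix.cons_val_one] <;>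
        first
        | exact P.refl _ | exact hik | exact P.symm hik
        | (unfold p13_2; simp [Setoid.ker_def]; done)
        | (unfold p13_2; simpa [Setoid.ker_def] using P.symm hik)
  · rintro hcx ⟨f, hf, hrel⟩
    have h02 : p13_2.r 0 2 := rfl
    have h01 : ¬ p13_2.r 0 1 := by
      intro h
      have : (0 : ℕ) = 1 := h
      omega
    have hP02 : P.r (f 0) (f 2) := (hrel 0 2).1 h02
    have hP01 : P.r (f 0) (f 1) :=
      hcx (f 0) (f 1) (f 2) (hf (by decide : (0:Fin 3) < 1)).le
        (hf (by decide : (1:Fin 3) < 2)).le hP02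
    exact h01 ((hrel 0 1).2 hP01)

lemma blockMin_mem (P : SetPartition (m + 1)) (i : Fin (m + 1)) :
    ∃ h : blockMin P i < m + 1, P.r ⟨blockMin P i, h⟩ i :=
  Nat.sInf_mem (s := {j : ℕ | ∃ h : j < m + 1, P.r ⟨j, h⟩ i}) ⟨(i : ℕ), i.isLt, by simpa using P.refl i⟩

lemma blockMax_mem (P : SetPartition (m + 1)) (i : Fin (m + 1)) :
    ∃ h : blockMax P i < m + 1, P.r ⟨blockMax P i, h⟩ i :=
  Nat.sSup_mem (s := {j : ℕ | ∃ h : j < m + 1, P.r ⟨j, h⟩ i})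
    ⟨(i : ℕ), i.isLt, by simpa using P.refl i⟩
    ⟨m + 1, fun j hj => by obtain ⟨h, _⟩ := hj; omega⟩

lemma blockMin_le (P : SetPartition (m + 1)) {i : Fin (m + 1)} {j : ℕ} {hj : j < m + 1}
    (h : P.r ⟨j, hj⟩ i) : blockMin P i ≤ j :=
  Nat.sInf_le ⟨hj, h⟩

lemma le_blockMax (P : SetPartition (m + 1)) {i : Fin (m + 1)} {j : ℕ} {hj : j < m + 1}
    (h : P.r ⟨j, hj⟩ i) : j ≤ blockMax P i :=
  le_csSup ⟨m + 1, fun x hx => by obtain ⟨h, _⟩ := hx; omega⟩ ⟨hj, h⟩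

lemma blockMin_le_self (P : SetPartition (m + 1)) (i : Fin (m + 1)) : blockMin P i ≤ (i : ℕ) :=
  blockMin_le P (j := (i : ℕ)) (hj := i.isLt) (P.refl i)

lemma self_le_blockMax (P : SetPartition (m + 1)) (i : Fin (m + 1)) : (i : ℕ) ≤ blockMax P i :=
  le_blockMax P (j := (i : ℕ)) (hj := i.isLt) (P.refl i)

lemma mem_iff {P : SetPartition (m + 1)} (hcx : Cx P) (i : Fin (m + 1)) (j : ℕ) (hj : j < m + 1) :
    P.r ⟨j, hj⟩ i ↔ blockMin P i ≤ j ∧ j ≤ blockMax P i := by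
  constructor
  · intro h; exact ⟨blockMin_le P h, le_blockMax P h⟩
  · rintro ⟨h1, h2⟩
    obtain ⟨hb, rb⟩ := blockMin_mem P i
    obtain ⟨hc, rc⟩ := blockMax_mem P i
    have rbc : P.r ⟨blockMin P i, hb⟩ ⟨blockMax P i, hc⟩ := P.trans rb (P.symm rc)
    have rbj : P.r ⟨blockMin P i, hb⟩ ⟨j, hj⟩ :=
      hcx _ _ _ (by simpa [Fin.le_def] using h1) (by simpa [Fin.le_def] using h2) rbc
    exact P.trans (P.symm rbj) rb

lemma blockMin_eq_of_r {P : SetPartition (m + 1)} {i j : Fin (m + 1)} (h : P.r j i) :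
    blockMin P j = blockMin P i := by
  have hs : {x : ℕ | ∃ hx : x < m + 1, P.r ⟨x, hx⟩ j} = {x : ℕ | ∃ hx : x < m + 1, P.r ⟨x, hx⟩ i} := by
    ext x
    constructor <;> rintro ⟨hx, hr⟩
    · exact ⟨hx, P.trans hr h⟩
    · exact ⟨hx, P.trans hr (P.symm h)⟩
  simp only [blockMin, hs]

lemma r_iff_blockMin_eq {P : SetPartition (m + 1)} (i j : Fin (m + 1)) :
    P.r j i ↔ blockMin P j = blockMin P i := by
  constructor
  · exact blockMin_eq_of_r
  · intro h
    obtain ⟨hb, rb⟩ := blockMin_mem P j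
    obtain ⟨hb', rb'⟩ := blockMin_mem P i
    have : (⟨blockMin P j, hb⟩ : Fin (m + 1)) = ⟨blockMin P i, hb'⟩ := Fin.ext h
    exact P.trans (P.symm rb) (this ▸ rb')

/-- Counting lemma. -/
lemma count_Ico (N a c : ℕ) (hc : c ≤ N) :
    (Finset.univ.filter fun j : Fin N => a ≤ (j : ℕ) ∧ (j : ℕ) < c).card = c - a := by
  rw [← Nat.card_Ico a c]
  refine Finset.card_bij' (fun j _ => (j : ℕ)) (fun x hx => ⟨x, ?_⟩) ?_ ?_ ?_ ?_
  · simp only [Finset.mem_Ico] at hx; omega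
  · intro j hj; simp only [Finset.mem_filter] at hj; simp [Finset.mem_Ico]; omega
  · intro x hx; simp only [Finset.mem_Ico] at hx; simp; omega
  · intro j hj; rfl
  · intro x hx; rfl

def minima (P : SetPartition (m + 1)) : Finset (Fin (m + 1)) :=
  Finset.univ.filter fun i : Fin (m + 1) => blockMin P i = (i : ℕ)

lemma minFin_mem_minima (P : SetPartition (m + 1)) (j : Fin (m + 1)) :
    (⟨blockMin P j, (blockMin_mem P j).1⟩ : Fin (m + 1)) ∈ minima P := by
  obtain ⟨hb, rb⟩ := blockMin_mem P j
  simp only [minima, Finset.mem_filter, Finset.mem_univ, true_and]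
  exact blockMin_eq_of_r rb

lemma blockNum_eq (P : SetPartition (m + 1)) : blockNum P = (minima P).card := by
  rw [blockNum]
  refine (Finset.card_bij (fun (i : Fin (m + 1)) (_ : i ∈ minima P) => Quotient.mk P i) ?_ ?_ ?_).symm
  · intro a _; exact Finset.mem_image_of_mem _ (Finset.mem_univ a)
  · intro a ha b hb hab
    simp only [minima, Finset.mem_filter] at ha hb
    have hr : P.r a b := Quotient.eq''.mp hab
    have := blockMin_eq_of_r hr
    exact Fin.ext (by omega)
  · intro c hc
    obtain ⟨j, _, rfl⟩ := Finset.mem_image.mp hc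
    obtain ⟨hb, rb⟩ := blockMin_mem P j
    exact ⟨⟨blockMin P j, hb⟩, minFin_mem_minima P j, Quotient.sound rb⟩

def gaps (P : SetPartition (m + 1)) : Finset (Fin m) :=
  Finset.univ.filter fun g : Fin m => P.r g.castSucc g.succ

lemma spread_def (P : SetPartition (m + 1)) :
    spread P = ∑ b ∈ minima P, (blockMax P b - (b : ℕ)) := rfl

lemma sum_blocks {P : SetPartition (m + 1)} (hcx : Cx P) :
    ∑ b ∈ minima P, (blockMax P b + 1 - (b : ℕ)) = m + 1 := by
  have h := Finset.card_eq_sum_card_fiberwise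
    (f := fun j : Fin (m + 1) => (⟨blockMin P j, (blockMin_mem P j).1⟩ : Fin (m + 1)))
    (s := Finset.univ) (t := minima P) (fun j _ => minFin_mem_minima P j)
  have h3 : ∀ b ∈ minima P,
      (Finset.univ.filter fun j : Fin (m + 1) =>
        (⟨blockMin P j, (blockMin_mem P j).1⟩ : Fin (m + 1)) = b).card
      = blockMax P b + 1 - (b : ℕ) := by
    intro b hb
    simp only [minima, Finset.mem_filter, Finset.mem_univ, true_and] at hb
    have hmax := (blockMax_mem P b).1
    rw [← count_Ico (m + 1) (b : ℕ) (blockMax P b + 1) (by omega)]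
    congr 1
    ext j
    simp only [Finset.mem_filter, Finset.mem_univ, true_and]
    constructor
    · intro hj
      have h1 : blockMin P j = (b : ℕ) := congrArg Fin.val hj
      have hr : P.r j b := (r_iff_blockMin_eq b j).mpr (h1.trans hb.symm)
      have c1 := (mem_iff hcx b (j : ℕ) j.isLt).mp hr
      exact ⟨by omega, by omega⟩
    · rintro ⟨h1, h2⟩
      have hr : P.r j b := (mem_iff hcx b (j : ℕ) j.isLt).mpr ⟨by omega, by omega⟩
      exact Fin.ext (((r_iff_blockMin_eq b j).mp hr).trans hb)
  have h4 := h.trans (Finset.sum_congr rfl h3)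
  simpa using h4.symm

lemma spread_eq_gaps {P : SetPartition (m + 1)} (hcx : Cx P) :
    spread P = (gaps P).card := by
  have h := Finset.card_eq_sum_card_fiberwise
    (f := fun g : Fin m => (⟨blockMin P g.castSucc, (blockMin_mem P g.castSucc).1⟩ : Fin (m + 1)))
    (s := gaps P) (t := minima P) (fun g _ => minFin_mem_minima P g.castSucc)
  have h3 : ∀ b ∈ minima P,
      ((gaps P).filter fun g : Fin m =>
        (⟨blockMin P g.castSucc, (blockMin_mem P g.castSucc).1⟩ : Fin (m + 1)) = b).card
      = blockMax P b - (b : ℕ) := by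
    intro b hb
    simp only [minima, Finset.mem_filter, Finset.mem_univ, true_and] at hb
    have hmax := (blockMax_mem P b).1
    rw [← count_Ico m (b : ℕ) (blockMax P b) (by omega)]
    congr 1
    ext g
    simp only [gaps, Finset.mem_filter, Finset.mem_univ, true_and]
    constructor
    · rintro ⟨hg, hf⟩
      have h1 : blockMin P g.castSucc = (b : ℕ) := congrArg Fin.val hf
      have hr : P.r g.castSucc b := (r_iff_blockMin_eq b g.castSucc).mpr (h1.trans hb.symm)
      have hrs : P.r g.succ b := P.trans (P.symm hg) hr
      have c1 := (mem_iff hcx b ((g : ℕ)) (by omega)).mp hr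
      have c2 := (mem_iff hcx b ((g : ℕ) + 1) (by omega)).mp hrs
      exact ⟨by omega, by omega⟩
    · rintro ⟨h1, h2⟩
      have hr : P.r g.castSucc b := (mem_iff hcx b ((g : ℕ)) (by omega)).mpr ⟨by omega, by omega⟩
      have hrs : P.r g.succ b := (mem_iff hcx b ((g : ℕ) + 1) (by omega)).mpr ⟨by omega, by omega⟩
      exact ⟨P.trans hr (P.symm hrs), Fin.ext (((r_iff_blockMin_eq b g.castSucc).mp hr).trans hb)⟩
  rw [spread_def]
  exact (Finset.sum_congr rfl h3).symm.trans h.symm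

lemma spread_add_blockNum {P : SetPartition (m + 1)} (hcx : Cx P) :
    spread P + blockNum P = m + 1 := by
  rw [blockNum_eq, spread_def, Finset.card_eq_sum_ones, ← Finset.sum_add_distrib]
  refine Eq.trans (Finset.sum_congr rfl fun b hb => ?_) (sum_blocks hcx)
  have := self_le_blockMax P b
  omega

/-- the interval-merge relation determined by a set of gaps -/
def brel (S : Finset (Fin m)) (i j : Fin (m + 1)) : Prop :=
  ∀ g : Fin m, min (i : ℕ) (j : ℕ) ≤ (g : ℕ) → (g : ℕ) < max (i : ℕ) (j : ℕ) → g ∈ S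

def ofBreaks (S : Finset (Fin m)) : SetPartition (m + 1) :=
  ⟨brel S,
   fun i g h1 h2 => absurd h2 (by omega),
   fun {i j} h g h1 h2 => h g (by omega) (by omega),
   fun {i j k} hij hjk g h1 h2 => by
     by_cases hc : min (i : ℕ) (j : ℕ) ≤ (g : ℕ) ∧ (g : ℕ) < max (i : ℕ) (j : ℕ)
     · exact hij g hc.1 hc.2
     · exact hjk g (by omega) (by omega)⟩

lemma ofBreaks_r (S : Finset (Fin m)) (i j : Fin (m + 1)) :
    (ofBreaks S).r i j ↔ brel S i j := Iff.rfl

lemma cx_ofBreaks (S : Finset (Fin m)) : Cx (ofBreaks S) := by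
  intro i j k hij hjk h g h1 h2
  have hij' : (i : ℕ) ≤ (j : ℕ) := hij
  have hjk' : (j : ℕ) ≤ (k : ℕ) := hjk
  exact h g (by omega) (by omega)

lemma r_run {P : SetPartition (m + 1)} (hcx : Cx P) {i j : Fin (m + 1)} (hij : i ≤ j)
    (h : P.r i j) (g : Fin m) (h1 : (i : ℕ) ≤ (g : ℕ)) (h2 : (g : ℕ) < (j : ℕ)) :
    P.r g.castSucc g.succ := by
  have hle : (i : ℕ) ≤ (j : ℕ) := hij
  have hig : P.r i g.castSucc := hcx i g.castSucc j (by simp [Fin.le_def]; omega) (by simp [Fin.le_def]; omega) h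
  have hgj : P.r g.castSucc j := P.trans (P.symm hig) h
  exact hcx g.castSucc g.succ j (by simp [Fin.le_def]) (by simp [Fin.le_def]; omega) hgj

lemma run_r_aux (P : SetPartition (m + 1)) (d : ℕ) :
    ∀ i j : Fin (m + 1), (j : ℕ) = (i : ℕ) + d →
      (∀ g : Fin m, (i : ℕ) ≤ (g : ℕ) → (g : ℕ) < (j : ℕ) → P.r g.castSucc g.succ) →
      P.r i j := by
  induction d with
  | zero =>
    intro i j hd _
    have : i = j := Fin.ext (by omega)
    subst this
    exact P.refl i
  | succ d ih =>
    intro i j hd h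
    have hjlt : (j : ℕ) < m + 1 := j.isLt
    have hgm : (i : ℕ) + d < m := by omega
    set j' : Fin (m + 1) := ⟨(i : ℕ) + d, by omega⟩ with hj'
    have hjv : (j' : ℕ) = (i : ℕ) + d := rfl
    have hrj' : P.r i j' := ih i j' rfl (fun g hg1 hg2 => h g hg1 (by omega))
    set g : Fin m := ⟨(i : ℕ) + d, hgm⟩ with hg
    have hgv : (g : ℕ) = (i : ℕ) + d := rfl
    have hadj : P.r g.castSucc g.succ := h g (by omega) (by omega)
    have e1 : g.castSucc = j' := rfl
    have e2 : g.succ = j := Fin.ext (by simp only [Fin.val_succ]; omega)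
    rw [e1, e2] at hadj
    exact P.trans hrj' hadj

lemma run_r (P : SetPartition (m + 1)) {i j : Fin (m + 1)} (hij : i ≤ j)
    (h : ∀ g : Fin m, (i : ℕ) ≤ (g : ℕ) → (g : ℕ) < (j : ℕ) → P.r g.castSucc g.succ) :
    P.r i j := by
  have hle : (i : ℕ) ≤ (j : ℕ) := hij
  exact run_r_aux P ((j : ℕ) - (i : ℕ)) i j (by omega) h

lemma r_iff_gaps {P : SetPartition (m + 1)} (hcx : Cx P) (i j : Fin (m + 1)) :
    P.r i j ↔ brel (gaps P) i j := by
  constructor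
  · intro h g h1 h2
    simp only [gaps, Finset.mem_filter, Finset.mem_univ, true_and]
    rcases le_total i j with hij | hij
    · have : (i : ℕ) ≤ (j : ℕ) := hij
      exact r_run hcx hij h g (by omega) (by omega)
    · have : (j : ℕ) ≤ (i : ℕ) := hij
      exact r_run hcx hij (P.symm h) g (by omega) (by omega)
  · intro h
    rcases le_total i j with hij | hij
    · have hle : (i : ℕ) ≤ (j : ℕ) := hij
      refine run_r P hij fun g h1 h2 => ?_
      have := h g (by omega) (by omega)
      simpa [gaps] using this
    · have hle : (j : ℕ) ≤ (i : ℕ) := hij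
      refine P.symm (run_r P hij fun g h1 h2 => ?_)
      have := h g (by omega) (by omega)
      simpa [gaps] using this

lemma ofBreaks_gaps {P : SetPartition (m + 1)} (hcx : Cx P) : ofBreaks (gaps P) = P :=
  Setoid.ext fun i j => ((r_iff_gaps hcx i j).trans (ofBreaks_r (gaps P) i j).symm).symm

lemma gaps_ofBreaks (S : Finset (Fin m)) : gaps (ofBreaks S) = S := by
  ext g
  simp only [gaps, Finset.mem_filter, Finset.mem_univ, true_and, ofBreaks_r]
  constructor
  · intro h
    have := h g (by simp) (by simp)
    exact this
  · intro hg g' h1 h2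
    simp only [Fin.coe_castSucc, Fin.val_succ] at h1 h2
    have : g' = g := Fin.ext (by omega)
    exact this ▸ hg

lemma spread_ofBreaks (S : Finset (Fin m)) : spread (ofBreaks S) = S.card := by
  rw [spread_eq_gaps (cx_ofBreaks S), gaps_ofBreaks]

lemma blockNum_ofBreaks (S : Finset (Fin m)) : blockNum (ofBreaks S) = m + 1 - S.card := by
  have h := spread_add_blockNum (cx_ofBreaks S)
  rw [spread_ofBreaks] at h
  omega

lemma card_le_m (S : Finset (Fin m)) : S.card ≤ m := by
  have := Finset.card_le_univ S
  simpa using this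

lemma sum_pow_eq : ∀ (q t : ℚ), ∑ S : Finset (Fin m), q ^ S.card * t ^ (m + 1 - S.card) = (q + t) ^ m * t := by
  intro q t
  have h := Finset.prod_add (fun _ : Fin m => q) (fun _ : Fin m => t) Finset.univ
  simp only [Finset.prod_const, Finset.powerset_univ] at h
  rw [Finset.card_univ, Fintype.card_fin] at h
  calc ∑ S : Finset (Fin m), q ^ S.card * t ^ (m + 1 - S.card)
      = ∑ S : Finset (Fin m), (q ^ S.card * t ^ ((Finset.univ \ S).card)) * t := by
        refine Finset.sum_congr rfl fun S _ => ?_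
        rw [Finset.card_sdiff_of_subset (Finset.subset_univ S), Finset.card_univ, Fintype.card_fin]
        have := card_le_m S
        rw [show m + 1 - S.card = (m - S.card) + 1 by omega, pow_succ]
        ring
    _ = (∑ S : Finset (Fin m), q ^ S.card * t ^ ((Finset.univ \ S).card)) * t := by
        rw [Finset.sum_mul]
    _ = (q + t) ^ m * t := by rw [← h]

end Aux

/-- over `Π_n(13/2)`, the joint (spread, block) generating function is
`(q+t)^{n-1} t`, and the dimension generating function is `2^{n-1} q^n`. -/
theorem SB_Dim_13_2 (n : ℕ) (hn : 1 ≤ n) (q t : ℚ) :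
    SB n p13_2 q t = (q + t) ^ (n - 1) * t ∧
    DimGF n p13_2 q = 2 ^ (n - 1) * q ^ n := by
  obtain ⟨m, rfl⟩ : ∃ m, n = m + 1 := ⟨n - 1, by omega⟩
  have hsum : ∀ (f : SetPartition (m + 1) → ℚ) (g : Finset (Fin m) → ℚ),
      (∀ S : Finset (Fin m), f (ofBreaks S) = g S) →
      ∑ P ∈ Finset.univ.filter (fun P : SetPartition (m + 1) => SPAvoids P p13_2), f P
        = ∑ S : Finset (Fin m), g S := by
    intro f g hfg
    refine Finset.sum_nbij' (i := fun P => gaps P) (j := fun S => ofBreaks S) ?_ ?_ ?_ ?_ ?_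
    · intro P _; exact Finset.mem_univ _
    · intro S _
      simp only [Finset.mem_filter, Finset.mem_univ, true_and]
      exact (avoids_iff _).2 (cx_ofBreaks S)
    · intro P hP
      simp only [Finset.mem_filter, Finset.mem_univ, true_and] at hP
      exact ofBreaks_gaps ((avoids_iff P).1 hP)
    · intro S _; exact gaps_ofBreaks S
    · intro P hP
      simp only [Finset.mem_filter, Finset.mem_univ, true_and] at hP
      have hcx := (avoids_iff P).1 hP
      rw [← ofBreaks_gaps hcx, hfg]
      rw [ofBreaks_gaps hcx]
  constructor
  · rw [SB, hsum _ (fun S => q ^ S.card * t ^ (m + 1 - S.card))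
      (fun S => by rw [spread_ofBreaks, blockNum_ofBreaks]), sum_pow_eq]
    simp
  · rw [DimGF, hsum _ (fun S => q ^ (m + 1))
      (fun S => by rw [spread_ofBreaks, blockNum_ofBreaks]; congr 1; have := card_le_m S; omega)]
    rw [Finset.sum_const, Finset.card_univ, Fintype.card_finset, Fintype.card_fin]
    simp [nsmul_eq_mul]


end
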